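/- The operator J𝒜, where J = [[I, 0], [0, -I]], is self-adjoint in the Hilbert space H_{1/2} × H, and consequently 𝒜* = J𝒜J with 𝒟(𝒜*) = J𝒟(𝒜). -/

import Mathlib

open scoped InnerProductSpace ComplexConjugate
open Filter

/-- Abstract setup for the second order equation `z̈ + A₀ z + D ż = 0`:
`Hhalf` plays the role of `H_{1/2} = 𝒟(A₀^{1/2})` with the norm `‖A₀^{1/2}·‖`, `H` is the
pivot Hilbert space and `Hm` is the dual `H_{-1/2}`; `ι : H_{1/2} → H` and `j : H → H_{-1/2}`
are the (dense, injective, continuous) inclusions; the uniformly positive self-adjoint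
operator `A₀` induces an isometric isomorphism `A₀ : H_{1/2} → H_{-1/2}`; the damping
operator `D : H_{1/2} → H_{-1/2}` is bounded, and `A₀^{-1/2} D A₀^{-1/2}` is self-adjoint
nonnegative, expressed via the duality pairing
`⟨u, z⟩_{H_{-1/2}×H_{1/2}} = ⟪A₀⁻¹ u, z⟫_{H_{1/2}}`. -/
structure BeamSetup (Hhalf H Hm : Type*)
    [NormedAddCommGroup Hhalf] [InnerProductSpace ℂ Hhalf] [CompleteSpace Hhalf]
    [NormedAddCommGroup H] [InnerProductSpace ℂ H] [CompleteSpace H]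
    [NormedAddCommGroup Hm] [InnerProductSpace ℂ Hm] [CompleteSpace Hm] : Type _ where
  ι : Hhalf →L[ℂ] H
  ι_inj : Function.Injective ι
  ι_dense : DenseRange ι
  j : H →L[ℂ] Hm
  j_inj : Function.Injective j
  A₀ : Hhalf ≃ₗᵢ[ℂ] Hm
  compat : ∀ (y : H) (z : Hhalf), ⟪A₀.symm (j y), z⟫_ℂ = ⟪y, ι z⟫_ℂ
  D : Hhalf →L[ℂ] Hm
  D_symm : ∀ z w : Hhalf, ⟪A₀.symm (D z), w⟫_ℂ = ⟪z, A₀.symm (D w)⟫_ℂ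
  D_nonneg : ∀ z : Hhalf, 0 ≤ (⟪A₀.symm (D z), z⟫_ℂ).re

namespace BeamSetup

variable {Hhalf H Hm : Type*}
    [NormedAddCommGroup Hhalf] [InnerProductSpace ℂ Hhalf] [CompleteSpace Hhalf]
    [NormedAddCommGroup H] [InnerProductSpace ℂ H] [CompleteSpace H]
    [NormedAddCommGroup Hm] [InnerProductSpace ℂ Hm] [CompleteSpace Hm]
    (S : BeamSetup Hhalf H Hm)

/-- `A₀⁻¹ : H_{-1/2} → H_{1/2}` as a continuous linear map. -/
noncomputable def Ai : Hm →L[ℂ] Hhalf :=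
  (S.A₀.symm.toContinuousLinearEquiv : Hm ≃L[ℂ] Hhalf)

/-- `A₀⁻¹ D` as a bounded operator on `H_{1/2}`. -/
noncomputable def T : Hhalf →L[ℂ] Hhalf := S.Ai.comp S.D

/-- `A₀⁻¹ : H → H_{1/2}`. -/
noncomputable def Ainv : H →L[ℂ] Hhalf := S.Ai.comp S.j

/-- `A₀⁻¹` considered as a bounded operator on `H_{1/2}`. -/
noncomputable def AinvR : Hhalf →L[ℂ] Hhalf := S.Ainv.comp S.ι

/-- `A₀⁻¹` considered as a bounded operator on `H`. -/
noncomputable def AinvH : H →L[ℂ] H := S.ι.comp S.Ainv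

/-- `λ` is an eigenvalue of the operator matrix `𝒜 = [[0, I], [-A₀, -D]]` with domain
`𝒟(𝒜) = {(z,w) ∈ H_{1/2} × H_{1/2} : A₀ z + D w ∈ H}`: there is a nonzero
`(z, ι w) ∈ 𝒟(𝒜)` (the domain condition being `j y = A₀ z + D w`, so that
`𝒜 (z, ι w) = (w, -y)`) with `𝒜 (z, ι w) = λ • (z, ι w)`. -/
def IsEigenvalue (lam : ℂ) : Prop :=
  ∃ (z w : Hhalf) (y : H), S.j y = S.A₀ z + S.D w ∧
    ((z, S.ι w) : Hhalf × H) ≠ 0 ∧ w = lam • z ∧ -y = lam • S.ι w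

/-- `λ` belongs to the resolvent set of `𝒜`: there is a bounded operator `R` on
`H_{1/2} × H` mapping onto `𝒟(𝒜)` which inverts `𝒜 - λ` from both sides. -/
def InResolvent (lam : ℂ) : Prop :=
  ∃ R : (Hhalf × H) →L[ℂ] (Hhalf × H),
    (∀ q : Hhalf × H, ∃ (z w : Hhalf) (y : H),
        R q = (z, S.ι w) ∧ S.j y = S.A₀ z + S.D w ∧
        ((w, -y) : Hhalf × H) - lam • ((z, S.ι w) : Hhalf × H) = q) ∧
    (∀ (z w : Hhalf) (y : H), S.j y = S.A₀ z + S.D w →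
        R (((w, -y) : Hhalf × H) - lam • ((z, S.ι w) : Hhalf × H)) = (z, S.ι w))


end BeamSetup

/-- The Hilbert space `H_{1/2} × H` (product with the ℓ²-norm). -/
abbrev BeamSetup.State (Hhalf H : Type*) [NormedAddCommGroup Hhalf] [NormedAddCommGroup H] :=
  WithLp 2 (Hhalf × H)

namespace BeamSetup

variable {Hhalf H Hm : Type*}
    [NormedAddCommGroup Hhalf] [InnerProductSpace ℂ Hhalf] [CompleteSpace Hhalf]
    [NormedAddCommGroup H] [InnerProductSpace ℂ H] [CompleteSpace H]
    [NormedAddCommGroup Hm] [InnerProductSpace ℂ Hm] [CompleteSpace Hm]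
    (S : BeamSetup Hhalf H Hm)

/-- Identification of `H_{1/2} × H` with the underlying product. -/
noncomputable def eqv : State Hhalf H ≃ₗ[ℂ] Hhalf × H := WithLp.linearEquiv 2 ℂ (Hhalf × H)

/-- The domain `𝒟(𝒜) = {(z,w) ∈ H_{1/2} × H_{1/2} : A₀ z + D w ∈ H}` of `𝒜`,
as a submodule of the state space `H_{1/2} × H`. -/
def domA : Submodule ℂ (State Hhalf H) where
  carrier := {p | ∃ (w : Hhalf) (y : H), S.ι w = (eqv p).2 ∧ S.j y = S.A₀ (eqv p).1 + S.D w}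
  zero_mem' := ⟨0, 0, by simp, by simp⟩
  add_mem' := by
    rintro p q ⟨w₁, y₁, hw₁, hy₁⟩ ⟨w₂, y₂, hw₂, hy₂⟩
    exact ⟨w₁ + w₂, y₁ + y₂, by simp [hw₁, hw₂], by simp [hy₁, hy₂]; abel⟩
  smul_mem' := by
    rintro c p ⟨w, y, hw, hy⟩
    exact ⟨c • w, c • y, by simp [hw], by simp [hy]⟩

/-- For `p = (z, ι w) ∈ 𝒟(𝒜)`, the element `w ∈ H_{1/2}`. -/
noncomputable def witw (p : S.domA) : Hhalf := p.2.choose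

/-- For `p = (z, ι w) ∈ 𝒟(𝒜)`, the element `y ∈ H` with `j y = A₀ z + D w`. -/
noncomputable def wity (p : S.domA) : H := p.2.choose_spec.choose

lemma witw_spec (p : S.domA) : S.ι (S.witw p) = (eqv (p : State Hhalf H)).2 :=
  p.2.choose_spec.choose_spec.1

lemma wity_spec (p : S.domA) :
    S.j (S.wity p) = S.A₀ (eqv (p : State Hhalf H)).1 + S.D (S.witw p) :=
  p.2.choose_spec.choose_spec.2

lemma witw_add (p q : S.domA) : S.witw (p + q) = S.witw p + S.witw q := by
  apply S.ι_inj
  simp only [map_add, witw_spec, Submodule.coe_add, Prod.snd_add]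

lemma wity_add (p q : S.domA) : S.wity (p + q) = S.wity p + S.wity q := by
  apply S.j_inj
  simp only [map_add, wity_spec, witw_add, Submodule.coe_add, Prod.fst_add, map_add]
  abel

lemma witw_smul (c : ℂ) (p : S.domA) : S.witw (c • p) = c • S.witw p := by
  apply S.ι_inj
  simp only [map_smul, witw_spec, Submodule.coe_smul, Prod.smul_snd]

lemma wity_smul (c : ℂ) (p : S.domA) : S.wity (c • p) = c • S.wity p := by
  apply S.j_inj
  simp only [map_smul, wity_spec, witw_smul, Submodule.coe_smul, Prod.smul_fst, map_smul,
    smul_add]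

/-- The operator matrix `𝒜 = [[0, I], [-A₀, -D]]` as a partially defined linear operator
on the Hilbert space `H_{1/2} × H`: `𝒜 (z, ι w) = (w, -(A₀ z + D w))`. -/
noncomputable def Aop : State Hhalf H →ₗ.[ℂ] State Hhalf H where
  domain := S.domA
  toFun :=
  { toFun := fun p => eqv.symm (S.witw p, -(S.wity p))
    map_add' := fun p q => by
      simp only [witw_add, wity_add, ← map_add, Prod.mk_add_mk, neg_add]
    map_smul' := fun c p => by
      simp only [witw_smul, wity_smul, RingHom.id_apply, ← map_smul, Prod.smul_mk, smul_neg] }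

/-- The operator `J𝒜`, where `J = [[I, 0], [0, -I]]`:  `J𝒜 (z, ι w) = (w, A₀ z + D w)`. -/
noncomputable def JA : State Hhalf H →ₗ.[ℂ] State Hhalf H where
  domain := S.domA
  toFun :=
  { toFun := fun p => eqv.symm (S.witw p, S.wity p)
    map_add' := fun p q => by
      simp only [witw_add, wity_add, ← map_add, Prod.mk_add_mk]
    map_smul' := fun c p => by
      simp only [witw_smul, wity_smul, RingHom.id_apply, ← map_smul, Prod.smul_mk] }

/-- The domain `J 𝒟(𝒜)` of the operator `J𝒜J`. -/
def domAJ : Submodule ℂ (State Hhalf H) where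
  carrier := {p | ∃ (w : Hhalf) (y : H), S.ι w = -(eqv p).2 ∧ S.j y = S.A₀ (eqv p).1 + S.D w}
  zero_mem' := ⟨0, 0, by simp, by simp⟩
  add_mem' := by
    rintro p q ⟨w₁, y₁, hw₁, hy₁⟩ ⟨w₂, y₂, hw₂, hy₂⟩
    refine ⟨w₁ + w₂, y₁ + y₂, by simp [hw₁, hw₂]; abel, by simp [hy₁, hy₂]; abel⟩
  smul_mem' := by
    rintro c p ⟨w, y, hw, hy⟩
    exact ⟨c • w, c • y, by simp [hw], by simp [hy]⟩

noncomputable def witwJ (p : S.domAJ) : Hhalf := p.2.choose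
noncomputable def wityJ (p : S.domAJ) : H := p.2.choose_spec.choose

lemma witwJ_spec (p : S.domAJ) : S.ι (S.witwJ p) = -(eqv (p : State Hhalf H)).2 :=
  p.2.choose_spec.choose_spec.1

lemma wityJ_spec (p : S.domAJ) :
    S.j (S.wityJ p) = S.A₀ (eqv (p : State Hhalf H)).1 + S.D (S.witwJ p) :=
  p.2.choose_spec.choose_spec.2

lemma witwJ_add (p q : S.domAJ) : S.witwJ (p + q) = S.witwJ p + S.witwJ q := by
  apply S.ι_inj
  simp only [map_add, witwJ_spec, Submodule.coe_add, Prod.snd_add]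
  abel

lemma wityJ_add (p q : S.domAJ) : S.wityJ (p + q) = S.wityJ p + S.wityJ q := by
  apply S.j_inj
  simp only [map_add, wityJ_spec, witwJ_add, Submodule.coe_add, Prod.fst_add, map_add]
  abel

lemma witwJ_smul (c : ℂ) (p : S.domAJ) : S.witwJ (c • p) = c • S.witwJ p := by
  apply S.ι_inj
  simp only [map_smul, witwJ_spec, Submodule.coe_smul, Prod.smul_snd, smul_neg]

lemma wityJ_smul (c : ℂ) (p : S.domAJ) : S.wityJ (c • p) = c • S.wityJ p := by
  apply S.j_inj
  simp only [map_smul, wityJ_spec, witwJ_smul, Submodule.coe_smul, Prod.smul_fst, map_smul,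
    smul_add]

/-- The operator `J𝒜J`, with domain `J 𝒟(𝒜)`:  `J𝒜J (z, -ι w) = (w, A₀ z + D w)`. -/
noncomputable def JAJ : State Hhalf H →ₗ.[ℂ] State Hhalf H where
  domain := S.domAJ
  toFun :=
  { toFun := fun p => eqv.symm (S.witwJ p, S.wityJ p)
    map_add' := fun p q => by
      simp only [witwJ_add, wityJ_add, ← map_add, Prod.mk_add_mk]
    map_smul' := fun c p => by
      simp only [witwJ_smul, wityJ_smul, RingHom.id_apply, ← map_smul, Prod.smul_mk] }

/- ### Auxiliary lemmas for the proof of `statement1`. -/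

section Aux

variable {Hhalf H Hm : Type*}
    [NormedAddCommGroup Hhalf] [InnerProductSpace ℂ Hhalf] [CompleteSpace Hhalf]
    [NormedAddCommGroup H] [InnerProductSpace ℂ H] [CompleteSpace H]
    [NormedAddCommGroup Hm] [InnerProductSpace ℂ Hm] [CompleteSpace Hm]
    (S : BeamSetup Hhalf H Hm)

lemma inner_state (x y : State Hhalf H) :
    ⟪x, y⟫_ℂ = ⟪(eqv x).1, (eqv y).1⟫_ℂ + ⟪(eqv x).2, (eqv y).2⟫_ℂ := rfl

lemma compat' (y : H) (z : Hhalf) : ⟪S.ι z, y⟫_ℂ = ⟪z, S.A₀.symm (S.j y)⟫_ℂ := by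
  rw [← inner_conj_symm, ← S.compat, inner_conj_symm]

lemma witw_eq {p : State Hhalf H} (hp : p ∈ S.domA) {w : Hhalf}
    (h : S.ι w = (eqv p).2) : S.witw ⟨p, hp⟩ = w :=
  S.ι_inj (by rw [S.witw_spec ⟨p, hp⟩, h])

lemma wity_eq {p : State Hhalf H} (hp : p ∈ S.domA) {w : Hhalf} {y : H}
    (hw : S.ι w = (eqv p).2) (hy : S.j y = S.A₀ (eqv p).1 + S.D w) :
    S.wity ⟨p, hp⟩ = y :=
  S.j_inj (by rw [S.wity_spec ⟨p, hp⟩, S.witw_eq hp hw, hy])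

lemma memA1 (y : H) :
    (eqv.symm (S.A₀.symm (S.j y), (0 : H)) : State Hhalf H) ∈ S.domA :=
  ⟨0, y, by simp, by simp⟩

lemma memA2 (w : Hhalf) :
    (eqv.symm (-(S.A₀.symm (S.D w)), S.ι w) : State Hhalf H) ∈ S.domA :=
  ⟨w, 0, by simp, by simp⟩

lemma JA_apply (p : S.JA.domain) :
    S.JA p = (eqv.symm (S.witw p, S.wity p) : State Hhalf H) := rfl

lemma Aop_apply (p : S.Aop.domain) :
    S.Aop p = (eqv.symm (S.witw p, -(S.wity p)) : State Hhalf H) := rfl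

lemma JAJ_apply (q : S.JAJ.domain) :
    S.JAJ q = (eqv.symm (S.witwJ q, S.wityJ q) : State Hhalf H) := rfl

/-- The core duality computation. -/
lemma core {z₁ w₁ : Hhalf} {y₁ : H} (hy₁ : S.j y₁ = S.A₀ z₁ + S.D w₁)
    {z₂ w₂ : Hhalf} {y₂ : H} (hy₂ : S.j y₂ = S.A₀ z₂ + S.D w₂) :
    ⟪w₁, z₂⟫_ℂ + ⟪y₁, S.ι w₂⟫_ℂ = ⟪z₁, w₂⟫_ℂ + ⟪S.ι w₁, y₂⟫_ℂ := by
  rw [← S.compat, S.compat', hy₁, hy₂, map_add, map_add, inner_add_left, inner_add_right,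
    LinearIsometryEquiv.symm_apply_apply, LinearIsometryEquiv.symm_apply_apply, S.D_symm]
  ring

lemma eq_zero_of_inner_iota {u : H} (h : ∀ w : Hhalf, ⟪S.ι w, u⟫_ℂ = 0) : u = 0 := by
  have hcl : IsClosed {x : H | ⟪x, u⟫_ℂ = 0} :=
    isClosed_eq (Continuous.inner continuous_id continuous_const) continuous_const
  have hsub : Set.univ ⊆ {x : H | ⟪x, u⟫_ℂ = 0} := by
    rw [← S.ι_dense.closure_eq]
    exact closure_minimal (by rintro x ⟨w, rfl⟩; exact h w) hcl
  exact inner_self_eq_zero.mp (hsub (Set.mem_univ u))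

lemma domA_dense : Dense (S.domA : Set (State Hhalf H)) := by
  rw [Submodule.dense_iff_topologicalClosure_eq_top,
    Submodule.topologicalClosure_eq_top_iff, Submodule.eq_bot_iff]
  intro q hq
  rw [Submodule.mem_orthogonal] at hq
  have hz : (eqv q).1 = 0 := by
    have h1 : ∀ y : H, ⟪y, S.ι (eqv q).1⟫_ℂ = 0 := by
      intro y
      have h := hq _ (S.memA1 y)
      rw [inner_state] at h
      simp only [LinearEquiv.apply_symm_apply, inner_zero_left, add_zero] at h
      rwa [S.compat] at h
    apply S.ι_inj
    rw [map_zero]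
    exact inner_self_eq_zero.mp (h1 (S.ι (eqv q).1))
  have hu : (eqv q).2 = 0 := by
    apply S.eq_zero_of_inner_iota
    intro w
    have h := hq _ (S.memA2 w)
    rw [inner_state] at h
    simp only [LinearEquiv.apply_symm_apply, hz, inner_zero_right, zero_add] at h
    exact h
  have : eqv q = (0 : Hhalf × H) := Prod.ext hz hu
  simpa using congrArg (eqv (Hhalf := Hhalf) (H := H)).symm this

lemma step2 {z₂ a : Hhalf} {b : H}
    (h : ∀ w : Hhalf, ⟪w, z₂⟫_ℂ = ⟪-(S.A₀.symm (S.D w)), a⟫_ℂ + ⟪S.ι w, b⟫_ℂ) :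
    S.j b = S.A₀ z₂ + S.D a := by
  have key : ∀ w : Hhalf, ⟪w, z₂ + S.A₀.symm (S.D a) - S.A₀.symm (S.j b)⟫_ℂ = 0 := by
    intro w
    have hw := h w
    rw [inner_neg_left, S.D_symm, S.compat'] at hw
    rw [inner_sub_right, inner_add_right]
    linear_combination hw
  have h0 : z₂ + S.A₀.symm (S.D a) - S.A₀.symm (S.j b) = 0 :=
    inner_self_eq_zero.mp (key _)
  have h1 : S.A₀.symm (S.j b) = z₂ + S.A₀.symm (S.D a) := (sub_eq_zero.mp h0).symm
  calc S.j b = S.A₀ (S.A₀.symm (S.j b)) := (S.A₀.apply_symm_apply _).symm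
    _ = S.A₀ (z₂ + S.A₀.symm (S.D a)) := by rw [h1]
    _ = S.A₀ z₂ + S.D a := by rw [map_add, S.A₀.apply_symm_apply]

lemma memA_of {q r : State Hhalf H}
    (h : ∀ p : S.domA,
      ⟪(eqv.symm (S.witw p, S.wity p) : State Hhalf H), q⟫_ℂ = ⟪(p : State Hhalf H), r⟫_ℂ) :
    q ∈ S.domA := by
  refine ⟨(eqv r).1, (eqv r).2, ?_, ?_⟩
  · symm
    refine ext_inner_left ℂ fun y => ?_
    have hp := h ⟨_, S.memA1 y⟩
    rw [S.witw_eq (S.memA1 y) (w := 0) (by simp),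
      S.wity_eq (S.memA1 y) (w := 0) (y := y) (by simp) (by simp),
      inner_state, inner_state] at hp
    simp only [LinearEquiv.apply_symm_apply, inner_zero_left, zero_add, add_zero] at hp
    rwa [S.compat] at hp
  · apply S.step2
    intro w
    have hp := h ⟨_, S.memA2 w⟩
    rw [S.witw_eq (S.memA2 w) (w := w) (by simp),
      S.wity_eq (S.memA2 w) (w := w) (y := 0) (by simp) (by simp),
      inner_state, inner_state] at hp
    simp only [LinearEquiv.apply_symm_apply, inner_zero_left, add_zero] at hp
    exact hp

lemma memAJ_of {q r : State Hhalf H}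
    (h : ∀ p : S.domA,
      ⟪(eqv.symm (S.witw p, -(S.wity p)) : State Hhalf H), q⟫_ℂ
        = ⟪(p : State Hhalf H), r⟫_ℂ) :
    q ∈ S.domAJ := by
  refine ⟨(eqv r).1, (eqv r).2, ?_, ?_⟩
  · rw [eq_comm, neg_eq_iff_eq_neg]
    refine ext_inner_left ℂ fun y => ?_
    have hp := h ⟨_, S.memA1 y⟩
    rw [S.witw_eq (S.memA1 y) (w := 0) (by simp),
      S.wity_eq (S.memA1 y) (w := 0) (y := y) (by simp) (by simp),
      inner_state, inner_state] at hp
    simp only [LinearEquiv.apply_symm_apply, inner_zero_left, zero_add, add_zero,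
      inner_neg_left] at hp
    rw [inner_neg_right, ← S.compat, ← hp, neg_neg]
  · apply S.step2
    intro w
    have hp := h ⟨_, S.memA2 w⟩
    rw [S.witw_eq (S.memA2 w) (w := w) (by simp),
      S.wity_eq (S.memA2 w) (w := w) (y := 0) (by simp) (by simp),
      inner_state, inner_state] at hp
    simp only [LinearEquiv.apply_symm_apply, neg_zero, inner_zero_left, add_zero] at hp
    exact hp

/-- `J𝒜` is symmetric. -/
lemma pairingJ (p q : S.domA) :
    ⟪(eqv.symm (S.witw p, S.wity p) : State Hhalf H), (q : State Hhalf H)⟫_ℂ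
      = ⟪(p : State Hhalf H), (eqv.symm (S.witw q, S.wity q) : State Hhalf H)⟫_ℂ := by
  rw [inner_state, inner_state]
  simp only [LinearEquiv.apply_symm_apply]
  rw [← S.witw_spec p, ← S.witw_spec q]
  exact S.core (S.wity_spec p) (S.wity_spec q)

/-- `J𝒜J` is a formal adjoint of `𝒜`. -/
lemma pairingA (p : S.domA) (q : S.domAJ) :
    ⟪(eqv.symm (S.witw p, -(S.wity p)) : State Hhalf H), (q : State Hhalf H)⟫_ℂ
      = ⟪(p : State Hhalf H), (eqv.symm (S.witwJ q, S.wityJ q) : State Hhalf H)⟫_ℂ := by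
  rw [inner_state, inner_state]
  simp only [LinearEquiv.apply_symm_apply]
  rw [← S.witw_spec p]
  have h2 : ((eqv (q : State Hhalf H)).2 : H) = -(S.ι (S.witwJ q)) := by
    rw [S.witwJ_spec q, neg_neg]
  rw [h2, inner_neg_left, inner_neg_right, neg_neg]
  exact S.core (S.wity_spec p) (S.wityJ_spec q)

end Aux

end BeamSetup

open BeamSetup

/-- The operator `J𝒜`, where `J = [[I, 0], [0, -I]]`, is self-adjoint in the
Hilbert space `H_{1/2} × H`, and consequently `𝒜* = J𝒜J` with `𝒟(𝒜*) = J𝒟(𝒜)`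
(the equality of `LinearPMap`s includes the equality of the domains). -/
theorem statement1 {Hhalf H Hm : Type*}
    [NormedAddCommGroup Hhalf] [InnerProductSpace ℂ Hhalf] [CompleteSpace Hhalf]
    [NormedAddCommGroup H] [InnerProductSpace ℂ H] [CompleteSpace H]
    [NormedAddCommGroup Hm] [InnerProductSpace ℂ Hm] [CompleteSpace Hm]
    (S : BeamSetup Hhalf H Hm) :
    _root_.IsSelfAdjoint S.JA ∧ S.Aop.adjoint = S.JAJ := by
  have hdA : Dense (S.Aop.domain : Set (State Hhalf H)) := S.domA_dense
  have hdJ : Dense (S.JA.domain : Set (State Hhalf H)) := S.domA_dense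
  constructor
  · rw [LinearPMap.isSelfAdjoint_def]
    have hfa : S.JA.IsFormalAdjoint S.JA := fun p q => S.pairingJ p q
    have hle : S.JA ≤ S.JA.adjoint := hfa.le_adjoint hdJ
    apply LinearPMap.ext
    · refine le_antisymm (fun q hq => ?_) hle.1
      apply S.memA_of (r := (S.JA.adjoint ⟨q, hq⟩ : State Hhalf H))
      intro p
      have h2 := LinearPMap.adjoint_isFormalAdjoint hdJ ⟨q, hq⟩ p
      calc ⟪(eqv.symm (S.witw p, S.wity p) : State Hhalf H), q⟫_ℂ
          = (starRingEnd ℂ) ⟪q, (S.JA p : State Hhalf H)⟫_ℂ := (inner_conj_symm _ _).symm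
        _ = (starRingEnd ℂ)
              ⟪(S.JA.adjoint ⟨q, hq⟩ : State Hhalf H), (p : State Hhalf H)⟫_ℂ :=
            congrArg _ h2.symm
        _ = ⟪(p : State Hhalf H), (S.JA.adjoint ⟨q, hq⟩ : State Hhalf H)⟫_ℂ :=
            inner_conj_symm _ _
    · intro x' hx hy
      set x : S.JA.adjoint.domain := ⟨x', hx⟩
      set y : S.JA.domain := ⟨x', hy⟩
      have hxy : (x : State Hhalf H) = y := rfl
      refine LinearPMap.adjoint_apply_eq hdJ x fun p => ?_
      have h : ⟪(S.JA p : State Hhalf H), (y : State Hhalf H)⟫_ℂ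
          = ⟪(p : State Hhalf H), (S.JA y : State Hhalf H)⟫_ℂ := S.pairingJ p y
      calc ⟪(S.JA y : State Hhalf H), (p : State Hhalf H)⟫_ℂ
          = (starRingEnd ℂ) ⟪(p : State Hhalf H), (S.JA y : State Hhalf H)⟫_ℂ :=
            (inner_conj_symm _ _).symm
        _ = (starRingEnd ℂ) ⟪(S.JA p : State Hhalf H), (y : State Hhalf H)⟫_ℂ :=
            congrArg _ h.symm
        _ = ⟪(y : State Hhalf H), (S.JA p : State Hhalf H)⟫_ℂ := inner_conj_symm _ _
        _ = ⟪(x : State Hhalf H), (S.JA p : State Hhalf H)⟫_ℂ := by rw [hxy]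
  · have hfa : S.Aop.IsFormalAdjoint S.JAJ := fun p q => S.pairingA p q
    have hle : S.JAJ ≤ S.Aop.adjoint := hfa.le_adjoint hdA
    apply LinearPMap.ext
    · refine le_antisymm (fun q hq => ?_) hle.1
      apply S.memAJ_of (r := (S.Aop.adjoint ⟨q, hq⟩ : State Hhalf H))
      intro p
      have h2 := LinearPMap.adjoint_isFormalAdjoint hdA ⟨q, hq⟩ p
      calc ⟪(eqv.symm (S.witw p, -(S.wity p)) : State Hhalf H), q⟫_ℂ
          = (starRingEnd ℂ) ⟪q, (S.Aop p : State Hhalf H)⟫_ℂ := (inner_conj_symm _ _).symm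
        _ = (starRingEnd ℂ)
              ⟪(S.Aop.adjoint ⟨q, hq⟩ : State Hhalf H), (p : State Hhalf H)⟫_ℂ :=
            congrArg _ h2.symm
        _ = ⟪(p : State Hhalf H), (S.Aop.adjoint ⟨q, hq⟩ : State Hhalf H)⟫_ℂ :=
            inner_conj_symm _ _
    · intro x' hx hy
      set x : S.Aop.adjoint.domain := ⟨x', hx⟩
      set y : S.JAJ.domain := ⟨x', hy⟩
      have hxy : (x : State Hhalf H) = y := rfl
      refine LinearPMap.adjoint_apply_eq hdA x fun p => ?_
      have h : ⟪(S.Aop p : State Hhalf H), (y : State Hhalf H)⟫_ℂ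
          = ⟪(p : State Hhalf H), (S.JAJ y : State Hhalf H)⟫_ℂ := S.pairingA p y
      calc ⟪(S.JAJ y : State Hhalf H), (p : State Hhalf H)⟫_ℂ
          = (starRingEnd ℂ) ⟪(p : State Hhalf H), (S.JAJ y : State Hhalf H)⟫_ℂ :=
            (inner_conj_symm _ _).symm
        _ = (starRingEnd ℂ) ⟪(S.Aop p : State Hhalf H), (y : State Hhalf H)⟫_ℂ :=
            congrArg _ h.symm
        _ = ⟪(y : State Hhalf H), (S.Aop p : State Hhalf H)⟫_ℂ := inner_conj_symm _ _
        _ = ⟪(x : State Hhalf H), (S.Aop p : State Hhalf H)⟫_ℂ := by rw [hxy]
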